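/- Let F be an algebraically closed field of odd characteristic p. Then SL(n, F) is not acceptable for any n ≥ 2. -/

import Mathlib

/-- A group `G` is *acceptable* if for every finite group `H`, any two element-conjugate
homomorphisms `H → G` are globally conjugate. -/
def IsAcceptable (G : Type*) [Group G] : Prop :=
  ∀ (H : Type) (_ : Group H) (_ : Finite H) (φ₁ φ₂ : H →* G),
    (∀ h : H, ∃ g : G, g * φ₁ h * g⁻¹ = φ₂ h) →
    ∃ g : G, ∀ h : H, g * φ₁ h * g⁻¹ = φ₂ h
section Aux
open Matrix
variable {F : Type} [Field F] {m : ℕ}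

/-- The elementary matrix with a `1` in position `(0,1)`. -/
abbrev Emat (F : Type) [Field F] (m : ℕ) : Matrix (Fin (m+2)) (Fin (m+2)) F :=
  single 0 1 1

lemma fin_one_ne_zero : (1 : Fin (m+2)) ≠ 0 := by
  simp [Fin.ext_iff]

lemma Emat_mul_Emat : Emat F m * Emat F m = 0 :=
  Matrix.single_mul_single_of_ne _ _ _ _ fin_one_ne_zero _

lemma Emat_ne_zero : Emat F m ≠ 0 := by
  intro h
  have h1 : Emat F m 0 1 = 1 := Matrix.single_apply_same _ _ _
  rw [h] at h1
  exact one_ne_zero h1.symm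

/-- The unipotent element `1 + x E₀₁` of `SL(m+2, F)`. -/
def Umat (F : Type) [Field F] (m : ℕ) (x : F) :
    Matrix.SpecialLinearGroup (Fin (m+2)) F :=
  ⟨1 + x • Emat F m, by
    have h : (1 : Matrix (Fin (m+2)) (Fin (m+2)) F) + x • Emat F m
        = transvection 0 1 x := by
      simp [transvection, Emat]
    rw [h]
    exact det_transvection_of_ne _ _ fin_one_ne_zero.symm x⟩

lemma Umat_coe (x : F) : (Umat F m x : Matrix (Fin (m+2)) (Fin (m+2)) F)
    = 1 + x • Emat F m := rfl

lemma Umat_mul (x y : F) : Umat F m x * Umat F m y = Umat F m (x + y) := by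
  apply Subtype.ext
  show (1 + x • Emat F m) * (1 + y • Emat F m) = 1 + (x+y) • Emat F m
  simp only [Matrix.add_mul, Matrix.mul_add, Matrix.mul_smul, Matrix.smul_mul,
    one_mul, mul_one, Emat_mul_Emat, smul_zero, add_zero, add_smul]
  abel

lemma Umat_zero : Umat F m 0 = 1 := by
  apply Subtype.ext
  show (1 : Matrix (Fin (m+2)) (Fin (m+2)) F) + (0:F) • Emat F m = 1
  simp

/-- `Umat` as a monoid hom from `Multiplicative F`. -/
def UmatHom (F : Type) [Field F] (m : ℕ) :
    Multiplicative F →* Matrix.SpecialLinearGroup (Fin (m+2)) F where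
  toFun x := Umat F m x.toAdd
  map_one' := Umat_zero
  map_mul' x y := (Umat_mul _ _).symm

lemma diagonal_mul_Emat (d : Fin (m+2) → F) :
    diagonal d * Emat F m = d 0 • Emat F m := by
  ext i j
  rw [Matrix.diagonal_mul, Matrix.smul_apply, smul_eq_mul]
  rcases eq_or_ne i 0 with rfl | h
  · rfl
  · rw [show Emat F m i j = 0 from Matrix.single_apply_of_row_ne (Ne.symm h) _ _ _,
      mul_zero, mul_zero]

lemma Emat_mul_diagonal (d : Fin (m+2) → F) :
    Emat F m * diagonal d = d 1 • Emat F m := by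
  ext i j
  rw [Matrix.mul_diagonal, Matrix.smul_apply, smul_eq_mul]
  rcases eq_or_ne j 1 with rfl | h
  · rw [mul_comm]
  · rw [show Emat F m i j = 0 from Matrix.single_apply_of_col_ne _ _ (Ne.symm h) _,
      zero_mul, mul_zero]

lemma Umat_conj [IsAlgClosed F] (x y : F) (hxy : x = 0 ↔ y = 0) :
    ∃ g : Matrix.SpecialLinearGroup (Fin (m+2)) F,
      g * Umat F m x * g⁻¹ = Umat F m y := by
  rcases eq_or_ne x 0 with rfl | hx
  · refine ⟨1, ?_⟩
    rw [hxy.mp rfl]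
    simp
  · have hy : y ≠ 0 := fun h => hx (hxy.mpr h)
    obtain ⟨t, ht⟩ := IsAlgClosed.exists_pow_nat_eq (y / x) zero_lt_two
    have ht0 : t ≠ 0 := by
      rintro rfl
      rw [zero_pow (by norm_num), eq_comm, div_eq_zero_iff] at ht
      tauto
    set d : Fin (m+2) → F := fun i => if i = 0 then t else if i = 1 then t⁻¹ else 1 with hd
    have hd0 : d 0 = t := by simp [hd]
    have hd1 : d 1 = t⁻¹ := by simp [hd, fin_one_ne_zero]
    have hdet : det (diagonal d) = 1 := by
      rw [det_diagonal]
      have hsplit : ∀ i : Fin (m+2),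
          d i = (if i = 0 then t else 1) * (if i = 1 then t⁻¹ else 1) := by
        intro i
        rcases eq_or_ne i 0 with rfl | h0
        · simp [hd, fin_one_ne_zero.symm]
        · rcases eq_or_ne i 1 with rfl | h1
          · simp [hd, fin_one_ne_zero]
          · simp [hd, h0, h1]
      rw [Finset.prod_congr rfl (fun i _ => hsplit i), Finset.prod_mul_distrib,
        Finset.prod_ite_eq', Finset.prod_ite_eq']
      simp [mul_inv_cancel₀ ht0]
    have hxt : x * t ^ 2 = y := by rw [ht]; field_simp
    let g0 : Matrix.SpecialLinearGroup (Fin (m+2)) F := ⟨diagonal d, hdet⟩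
    refine ⟨g0, ?_⟩
    rw [mul_inv_eq_iff_eq_mul]
    apply Subtype.ext
    rw [Matrix.SpecialLinearGroup.coe_mul, Matrix.SpecialLinearGroup.coe_mul]
    show diagonal d * ((1:Matrix (Fin (m+2)) (Fin (m+2)) F) + x • Emat F m)
      = (1 + y • Emat F m) * diagonal d
    rw [Matrix.mul_add, Matrix.add_mul, mul_one, one_mul, Matrix.mul_smul,
      Matrix.smul_mul, diagonal_mul_Emat, Emat_mul_diagonal, smul_smul, smul_smul,
      hd0, hd1]
    congr 1
    have : x * t = y * t⁻¹ := by
      field_simp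
      linear_combination hxt
    rw [this]
end Aux

theorem SL_not_acceptable (F : Type) [Field F] [IsAlgClosed F] (p : ℕ) [Fact p.Prime]
    [CharP F p] (hp : p ≠ 2) (n : ℕ) (hn : 2 ≤ n) :
    ¬ IsAcceptable (Matrix.SpecialLinearGroup (Fin n) F) := by
  obtain ⟨m, rfl⟩ : ∃ m, n = m + 2 := ⟨n - 2, by omega⟩
  intro hacc
  haveI : NeZero p := ⟨(Fact.out : p.Prime).ne_zero⟩
  set c : ZMod p →+* F := ZMod.castHom dvd_rfl F with hcdef
  obtain ⟨s, hs⟩ : ∃ s : F, s ∉ Set.range c :=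
    ((Set.finite_range (⇑c)).infinite_compl).nonempty
  have key : ∀ v : ZMod p × ZMod p, (c v.1 + s * c v.2 = 0) ↔ v = 0 := by
    rintro ⟨a, b⟩
    constructor
    · intro h
      rcases eq_or_ne b 0 with rfl | hb
      · simp only [map_zero, mul_zero, add_zero] at h
        have ha : a = 0 := c.injective (by rw [h, map_zero])
        simp [ha]
      · exfalso
        apply hs
        refine ⟨-a / b, ?_⟩
        have hcb : (c b : F) ≠ 0 := fun h' => hb (c.injective (by rw [h', map_zero]))
        rw [map_div₀, map_neg, div_eq_iff hcb]
        linear_combination -h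
    · intro h0
      rw [Prod.ext_iff] at h0
      obtain ⟨h0a, h0b⟩ := h0
      simp only [Prod.fst_zero, Prod.snd_zero] at h0a h0b
      subst h0a; subst h0b
      simp
  let ψ₁ : ZMod p × ZMod p →+ F :=
    AddMonoidHom.mk' (fun v => c v.1 + s * c v.2) (by intro v w; simp [map_add]; ring)
  let ψ₂ : ZMod p × ZMod p →+ F :=
    AddMonoidHom.mk' (fun v => c v.2 + s * c v.1) (by intro v w; simp [map_add]; ring)
  let φ₁ := (UmatHom F m).comp (AddMonoidHom.toMultiplicative ψ₁)
  let φ₂ := (UmatHom F m).comp (AddMonoidHom.toMultiplicative ψ₂)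
  have hφ₁ : ∀ v : ZMod p × ZMod p,
      φ₁ (Multiplicative.ofAdd v) = Umat F m (c v.1 + s * c v.2) := fun v => rfl
  have hφ₂ : ∀ v : ZMod p × ZMod p,
      φ₂ (Multiplicative.ofAdd v) = Umat F m (c v.2 + s * c v.1) := fun v => rfl
  have hconj : ∀ h, ∃ g : Matrix.SpecialLinearGroup (Fin (m+2)) F,
      g * φ₁ h * g⁻¹ = φ₂ h := by
    intro h
    set v : ZMod p × ZMod p := h.toAdd with hv
    have e1 : φ₁ h = Umat F m (c v.1 + s * c v.2) := rfl
    have e2 : φ₂ h = Umat F m (c v.2 + s * c v.1) := rfl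
    rw [e1, e2]
    apply Umat_conj
    rw [key v]
    rw [show (c v.2 + s * c v.1 = 0) ↔ (v.2, v.1) = (0 : ZMod p × ZMod p) from key (v.2, v.1)]
    rw [Prod.ext_iff, Prod.ext_iff]
    exact and_comm
  obtain ⟨g, hg⟩ := hacc (Multiplicative (ZMod p × ZMod p)) inferInstance inferInstance φ₁ φ₂ hconj
  have h1 := hg (Multiplicative.ofAdd ((1 : ZMod p), (0 : ZMod p)))
  have h2 := hg (Multiplicative.ofAdd ((0 : ZMod p), (1 : ZMod p)))
  rw [hφ₁, hφ₂] at h1 h2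
  simp only [_root_.map_one, _root_.map_zero, mul_zero, mul_one, add_zero, zero_add] at h1 h2
  rw [mul_inv_eq_iff_eq_mul] at h1 h2
  have h1' := congrArg (Subtype.val) h1
  have h2' := congrArg (Subtype.val) h2
  set M : Matrix (Fin (m+2)) (Fin (m+2)) F := (g : Matrix (Fin (m+2)) (Fin (m+2)) F) with hM
  simp only [Matrix.SpecialLinearGroup.coe_mul] at h1' h2'
  rw [show ((Umat F m (1:F) : Matrix (Fin (m+2)) (Fin (m+2)) F)) = 1 + (1:F) • Emat F m from rfl,
    show ((Umat F m s : Matrix (Fin (m+2)) (Fin (m+2)) F)) = 1 + s • Emat F m from rfl] at h1' h2'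
  rw [Matrix.mul_add, Matrix.add_mul, mul_one, one_mul, one_smul, Matrix.smul_mul] at h1'
  rw [Matrix.mul_add, Matrix.add_mul, mul_one, one_mul, one_smul, Matrix.mul_smul] at h2'
  have e1 : M * Emat F m = s • (Emat F m * M) := by
    have := h1'
    exact add_left_cancel this
  have e2 : s • (M * Emat F m) = Emat F m * M := add_left_cancel h2'
  have hkey : M * Emat F m = (s * s) • (M * Emat F m) := by
    conv_lhs => rw [e1, ← e2]
    rw [smul_smul]
  have hME : M * Emat F m ≠ 0 := by
    intro h0
    have hinv : ((g⁻¹ : Matrix.SpecialLinearGroup (Fin (m+2)) F) :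
        Matrix (Fin (m+2)) (Fin (m+2)) F) * M = 1 := by
      have h := congrArg (Subtype.val) (inv_mul_cancel g)
      rw [Matrix.SpecialLinearGroup.coe_mul] at h
      exact h
    have : Emat F m = (0 : Matrix (Fin (m+2)) (Fin (m+2)) F) := by
      calc Emat F m = (((g⁻¹ : Matrix.SpecialLinearGroup (Fin (m+2)) F) :
          Matrix (Fin (m+2)) (Fin (m+2)) F) * M) * Emat F m := by rw [hinv, one_mul]
      _ = ((g⁻¹ : Matrix.SpecialLinearGroup (Fin (m+2)) F) :
          Matrix (Fin (m+2)) (Fin (m+2)) F) * (M * Emat F m) := by rw [Matrix.mul_assoc]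
      _ = 0 := by rw [h0, Matrix.mul_zero]
    exact Emat_ne_zero this
  have h0 : ((1:F) - s * s) • (M * Emat F m) = 0 := by
    rw [sub_smul, one_smul, ← hkey, sub_self]
  have hs2 : s * s = 1 := by
    by_contra hne
    apply hME
    have h1ss : (1 : F) - s * s ≠ 0 := fun hh => hne (by linear_combination -hh)
    calc M * Emat F m
        = ((1:F) - s*s)⁻¹ • (((1:F) - s*s) • (M * Emat F m)) := by
          rw [smul_smul, inv_mul_cancel₀ h1ss, one_smul]
      _ = 0 := by rw [h0, smul_zero]
  have : (s - 1) * (s + 1) = 0 := by linear_combination hs2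
  rcases mul_eq_zero.mp this with h' | h'
  · refine hs ⟨1, ?_⟩
    rw [c.map_one]
    linear_combination -h'
  · refine hs ⟨-1, ?_⟩
    rw [show (c (-1) : F) = -1 by rw [c.map_neg, c.map_one]]
    linear_combination -h'
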